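/- arXiv:1310.4917 — 2 statements merged into one kernel-verified Lean document; each statement's English description precedes it below -/
import Mathlib

section
/- If a generalized evolutionary system E is pullback asymptotically compact, then the weak pullback attractor A_w(t) is a strongly compact strong pullback attractor: the strong pullback attractor A_s(t) exists and A_s(t) = Ω_s(X,t) = Ω_w(X,t) = A_w(t). -/
open Filter Topology MeasureTheory

variable {X : Type*}

/-- Convergence of a sequence with respect to a distance function `d`. -/
def Conv (d : X → X → ℝ) (u : ℕ → X) (x : X) : Prop :=
  ∀ ε > 0, ∃ N, ∀ n ≥ N, d (u n) x < ε

/-- The `d`-distance between two paired sequences tends to zero. -/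
def DistTendsZero (d : X → X → ℝ) (u v : ℕ → X) : Prop :=
  ∀ ε > 0, ∃ N, ∀ n ≥ N, d (u n) (v n) < ε

/-- Sequential closure of a set with respect to the distance `d`. -/
def SeqClosure (d : X → X → ℝ) (A : Set X) : Set X :=
  {x | ∃ u : ℕ → X, (∀ n, u n ∈ A) ∧ Conv d u x}

/-- Sequential closedness with respect to the distance `d`. -/
def SeqClosed (d : X → X → ℝ) (A : Set X) : Prop :=
  SeqClosure d A ⊆ A

/-- Sequential compactness of a set with respect to the distance `d`. -/
def SeqCompactIn (d : X → X → ℝ) (A : Set X) : Prop :=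
  ∀ u : ℕ → X, (∀ n, u n ∈ A) →
    ∃ x ∈ A, ∃ φ : ℕ → ℕ, StrictMono φ ∧ Conv d (u ∘ φ) x

/-- `d` is a metric on `X`. -/
def IsMetric (d : X → X → ℝ) : Prop :=
  (∀ x y, 0 ≤ d x y) ∧ (∀ x y, d x y = 0 ↔ x = y) ∧ (∀ x y, d x y = d y x) ∧
  (∀ x y z, d x z ≤ d x y + d y z)

/-- Uniform convergence of trajectories on each compact subinterval `[s,T]`,
i.e. convergence in `C([s,∞);X)` with distance `d` on `X`. -/
def ConvTraj (d : X → X → ℝ) (s : ℝ) (u : ℕ → ℝ → X) (v : ℝ → X) : Prop :=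
  ∀ T : ℝ, ∀ ε > 0, ∃ N, ∀ n ≥ N, ∀ r ∈ Set.Icc s T, d (u n r) (v r) < ε

/-- A generalized evolutionary system: to each interval `[s,∞)` it assigns a
nonempty set of trajectories (encoded as functions `ℝ → X`, only the values on
`[s,∞)` being relevant), closed under restriction to later starting times. -/
structure GES (X : Type*) where
  traj : ℝ → Set (ℝ → X)
  nonempty : ∀ s : ℝ, (traj s).Nonempty
  mono : ∀ ⦃s s' : ℝ⦄, s ≤ s' → traj s ⊆ traj s'

namespace GES

variable (E : GES X)

/-- Complete trajectories: those whose restriction to every `[T,∞)` is a trajectory. -/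
def complete : Set (ℝ → X) := {u | ∀ T : ℝ, u ∈ E.traj T}

/-- `P(t,s)A = {u(t) : u ∈ E([s,∞)), u(s) ∈ A}`. -/
def P (t s : ℝ) (A : Set X) : Set X :=
  {x | ∃ u ∈ E.traj s, u s ∈ A ∧ u t = x}

/-- `P̃(t,s)A = {u(t) : u ∈ E((-∞,∞)), u(s) ∈ A}`. -/
def Ptil (t s : ℝ) (A : Set X) : Set X :=
  {x | ∃ u ∈ E.complete, u s ∈ A ∧ u t = x}

/-- The pullback omega-limit `Ω_d(A,t) = ⋂_{s≤t} cl_d(⋃_{r≤s} P(t,r)A)`. -/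
def Omega (d : X → X → ℝ) (A : Set X) (t : ℝ) : Set X :=
  ⋂ s ∈ Set.Iic t, SeqClosure d (⋃ r ∈ Set.Iic s, E.P t r A)

/-- The family `Afam` pullback attracts the set `B` in the metric `d`. -/
def PullbackAttracts (d : X → X → ℝ) (Afam : ℝ → Set X) (B : Set X) : Prop :=
  ∀ t : ℝ, ∀ ε > 0, ∃ s0 ≤ t, ∀ s ≤ s0, ∀ x ∈ E.P t s B, ∃ a ∈ Afam t, d x a < ε

/-- The `d`-pullback attractor: a family of `d`-closed, `d`-pullback attracting
sets which is minimal with respect to these properties. -/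
def IsPullbackAttractor (d : X → X → ℝ) (Afam : ℝ → Set X) : Prop :=
  (∀ t, SeqClosed d (Afam t)) ∧ E.PullbackAttracts d Afam Set.univ ∧
  ∀ B : ℝ → Set X, (∀ t, SeqClosed d (B t)) → E.PullbackAttracts d B Set.univ →
    ∀ t, Afam t ⊆ B t

/-- Pullback asymptotic compactness with respect to `d`. -/
def PullbackAsympCompact (d : X → X → ℝ) : Prop :=
  ∀ t : ℝ, ∀ s : ℕ → ℝ, (∀ n, s n ≤ t) → Tendsto s atTop atBot →
    ∀ x : ℕ → X, (∀ n, x n ∈ E.P t (s n) Set.univ) →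
      ∃ y : X, ∃ φ : ℕ → ℕ, StrictMono φ ∧ Conv d (x ∘ φ) y

/-- Pullback semi-invariance. -/
def PBSemiInv (B : ℝ → Set X) : Prop :=
  ∀ ⦃s t : ℝ⦄, s ≤ t → E.Ptil t s (B s) ⊆ B t

/-- Pullback invariance. -/
def PBInv (B : ℝ → Set X) : Prop :=
  ∀ ⦃s t : ℝ⦄, s ≤ t → E.Ptil t s (B s) = B t

/-- Pullback quasi-invariance. -/
def PBQuasiInv (B : ℝ → Set X) : Prop :=
  ∀ t : ℝ, ∀ b ∈ B t, ∃ u ∈ E.complete, u t = b ∧ ∀ s ≤ t, u s ∈ B s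

/-- Condition A1: `E([s,∞))` is compact in `C([s,∞);X_w)` for each `s`. -/
def A1 (d : X → X → ℝ) : Prop :=
  ∀ s : ℝ, ∀ u : ℕ → ℝ → X, (∀ n, u n ∈ E.traj s) →
    ∃ v ∈ E.traj s, ∃ φ : ℕ → ℕ, StrictMono φ ∧ ConvTraj d s (fun n => u (φ n)) v

end GES

section Aux

variable {X : Type*}

lemma exists_nat_bound {ε : ℝ} (hε : 0 < ε) : ∃ N : ℕ, ∀ n ≥ N, (1 : ℝ) / (n + 1) < ε := by
  obtain ⟨N, hN⟩ := exists_nat_gt (1 / ε)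
  refine ⟨N, fun n hn => ?_⟩
  have h1 : (1 : ℝ) / ε < (n : ℝ) + 1 := by
    have : (N : ℝ) ≤ n := by exact_mod_cast hn
    linarith
  rw [div_lt_iff₀ (by positivity)]
  calc (1 : ℝ) = (1 / ε) * ε := by field_simp
    _ < ((n : ℝ) + 1) * ε := by exact mul_lt_mul_of_pos_right h1 hε
    _ = ε * ((n : ℝ) + 1) := by ring

lemma Conv.comp_le {d : X → X → ℝ} {u : ℕ → X} {x : X} (h : Conv d u x)
    (φ : ℕ → ℕ) (hφ : ∀ n, n ≤ φ n) : Conv d (u ∘ φ) x := by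
  intro ε hε
  obtain ⟨N, hN⟩ := h ε hε
  exact ⟨N, fun n hn => hN (φ n) (hn.trans (hφ n))⟩

lemma conv_trans {d : X → X → ℝ} (hd : IsMetric d) {u v : ℕ → X} {y : X}
    (h1 : Conv d u y) (h2 : DistTendsZero d u v) : Conv d v y := by
  intro ε hε
  obtain ⟨N1, hN1⟩ := h1 (ε / 2) (by linarith)
  obtain ⟨N2, hN2⟩ := h2 (ε / 2) (by linarith)
  refine ⟨max N1 N2, fun n hn => ?_⟩
  have ht := hd.2.2.2 (v n) (u n) y
  have h3 := hN1 n (le_trans (le_max_left _ _) hn)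
  have h4 := hN2 n (le_trans (le_max_right _ _) hn)
  have hs := hd.2.2.1 (u n) (v n)
  linarith

lemma seqClosed_seqClosure {d : X → X → ℝ} (hd : IsMetric d) (A : Set X) :
    SeqClosed d (SeqClosure d A) := by
  rintro x ⟨u, hu, hux⟩
  have key : ∀ n : ℕ, ∃ a, a ∈ A ∧ d (u n) a < 1 / (n + 1) := by
    intro n
    obtain ⟨w, hw, hwu⟩ := hu n
    obtain ⟨N, hN⟩ := hwu (1 / (n + 1)) (by positivity)
    refine ⟨w N, hw N, ?_⟩
    have := hN N le_rfl
    have hs := hd.2.2.1 (w N) (u n)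
    linarith
  choose a haA hd1 using key
  have h2 : DistTendsZero d u a := by
    intro ε hε
    obtain ⟨N, hN⟩ := exists_nat_bound hε
    exact ⟨N, fun n hn => lt_trans (hd1 n) (hN n hn)⟩
  exact ⟨a, haA, conv_trans hd hux h2⟩

lemma seqClosed_omega (E : GES X) {d : X → X → ℝ} (hd : IsMetric d) (A : Set X) (t : ℝ) :
    SeqClosed d (E.Omega d A t) := by
  rintro x ⟨u, hu, hux⟩
  rw [GES.Omega] at *
  refine Set.mem_iInter₂.mpr fun s hs => ?_
  apply seqClosed_seqClosure hd
  exact ⟨u, fun n => Set.mem_iInter₂.mp (hu n) s hs, hux⟩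

lemma mem_omega_of_seq (E : GES X) {d : X → X → ℝ} (t : ℝ) (s : ℕ → ℝ)
    (hst : ∀ n, s n ≤ t) (hs : ∀ r : ℝ, ∃ N, ∀ n ≥ N, s n ≤ r)
    (x : ℕ → X) (hx : ∀ n, x n ∈ E.P t (s n) Set.univ)
    (y : X) (hconv : Conv d x y) : y ∈ E.Omega d Set.univ t := by
  rw [GES.Omega]
  refine Set.mem_iInter₂.mpr fun s' _ => ?_
  obtain ⟨N, hN⟩ := hs s'
  refine ⟨fun n => x (n + N), fun n => ?_, ?_⟩
  · exact Set.mem_iUnion₂.mpr ⟨s (n + N), hN _ (Nat.le_add_left _ _), hx _⟩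
  · exact Conv.comp_le hconv (· + N) (fun n => Nat.le_add_right n N)

lemma seq_le_helper {s : ℕ → ℝ} {t : ℝ} (hs : ∀ n, s n ≤ min t (-(n : ℝ)))
    (φ : ℕ → ℕ) (hφ : ∀ n, n ≤ φ n) :
    ∀ r : ℝ, ∃ N, ∀ n ≥ N, s (φ n) ≤ r := by
  intro r
  obtain ⟨N, hN⟩ := exists_nat_gt (-r)
  refine ⟨N, fun n hn => ?_⟩
  have h1 : s (φ n) ≤ -((φ n : ℕ) : ℝ) := (hs _).trans (min_le_right _ _)
  have h2 : (N : ℝ) ≤ ((φ n : ℕ) : ℝ) := by exact_mod_cast hn.trans (hφ n)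
  linarith

lemma tendsto_helper {s : ℕ → ℝ} {t : ℝ} (hs : ∀ n, s n ≤ min t (-(n : ℝ))) :
    Tendsto s atTop atBot := by
  rw [tendsto_atBot]
  intro b
  rw [eventually_atTop]
  obtain ⟨N, hN⟩ := exists_nat_gt (-b)
  refine ⟨N, fun n hn => ?_⟩
  have h1 : (N : ℝ) ≤ n := by exact_mod_cast hn
  have h2 := (hs n).trans (min_le_right _ _)
  linarith

lemma omega_attracts (E : GES X) (ds d : X → X → ℝ)
    (hpac : E.PullbackAsympCompact ds)
    (hH : ∀ (u : ℕ → X) (y : X), Conv ds u y → Conv d u y) :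
    E.PullbackAttracts d (fun t => E.Omega ds Set.univ t) Set.univ := by
  intro t ε hε
  by_contra hcon
  push_neg at hcon
  have hsel : ∀ n : ℕ, ∃ s ≤ min t (-(n : ℝ)), ∃ x ∈ E.P t s Set.univ,
      ∀ a ∈ E.Omega ds Set.univ t, ε ≤ d x a := fun n => hcon _ (min_le_left _ _)
  choose s hs x hxP hxd using hsel
  have hst : ∀ n, s n ≤ t := fun n => (hs n).trans (min_le_left _ _)
  obtain ⟨y, φ, hφ, hconv⟩ := hpac t s hst (tendsto_helper hs) x hxP
  have hy : y ∈ E.Omega ds Set.univ t :=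
    mem_omega_of_seq E t (s ∘ φ) (fun n => hst _)
      (seq_le_helper hs φ (fun n => hφ.le_apply)) (x ∘ φ) (fun n => hxP _) y hconv
  obtain ⟨N, hN⟩ := hH _ _ hconv ε hε
  exact absurd (hN N le_rfl) (not_lt.mpr (hxd (φ N) y hy))

lemma omega_min (E : GES X) {d : X → X → ℝ} (hd : IsMetric d) (B : ℝ → Set X)
    (hBc : ∀ t, SeqClosed d (B t)) (hBa : E.PullbackAttracts d B Set.univ) (t : ℝ) :
    E.Omega d Set.univ t ⊆ B t := by
  intro y hy
  rw [GES.Omega] at hy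
  have key : ∀ n : ℕ, ∃ b ∈ B t, d y b < 2 / (n + 1) := by
    intro n
    obtain ⟨s0, hs0, hatt⟩ := hBa t (1 / (n + 1)) (by positivity)
    obtain ⟨w, hw, hwc⟩ := Set.mem_iInter₂.mp hy s0 hs0
    obtain ⟨N, hN⟩ := hwc (1 / (n + 1)) (by positivity)
    obtain ⟨r, hr, hwP⟩ := Set.mem_iUnion₂.mp (hw N)
    obtain ⟨b, hb, hdb⟩ := hatt r hr (w N) hwP
    refine ⟨b, hb, ?_⟩
    have h1 := hd.2.2.2 y (w N) b
    have h2 := hd.2.2.1 (w N) y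
    have h3 := hN N le_rfl
    have h4 : (2 : ℝ) / (n + 1) = 1 / (n + 1) + 1 / (n + 1) := by ring
    linarith
  choose b hbB hbd using key
  apply hBc t
  refine ⟨b, hbB, ?_⟩
  intro ε hε
  obtain ⟨N, hN⟩ := exists_nat_bound (show (0 : ℝ) < ε / 2 by linarith)
  refine ⟨N, fun n hn => ?_⟩
  have h1 := hbd n
  have h2 := hN n hn
  have h3 := hd.2.2.1 (b n) y
  have h4 : (2 : ℝ) / (n + 1) = 1 / (n + 1) + 1 / (n + 1) := by ring
  linarith

lemma seqClosure_mono_d {d1 d2 : X → X → ℝ}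
    (h : ∀ (u : ℕ → X) (y : X), Conv d1 u y → Conv d2 u y) (A : Set X) :
    SeqClosure d1 A ⊆ SeqClosure d2 A := by
  rintro x ⟨u, hu, hc⟩
  exact ⟨u, hu, h u x hc⟩

lemma omega_dw_subset (E : GES X) (ds dw : X → X → ℝ) (hdw : IsMetric dw)
    (hH : ∀ (u : ℕ → X) (y : X), Conv ds u y → Conv dw u y)
    (hpac : E.PullbackAsympCompact ds) (t : ℝ) :
    E.Omega dw Set.univ t ⊆ E.Omega ds Set.univ t := by
  intro y hy
  rw [GES.Omega] at hy
  have key : ∀ n : ℕ, ∃ r ≤ min t (-(n : ℝ)), ∃ x ∈ E.P t r Set.univ,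
      dw x y < 1 / (n + 1) := by
    intro n
    obtain ⟨w, hw, hwc⟩ :=
      Set.mem_iInter₂.mp hy (min t (-(n : ℝ))) (Set.mem_Iic.mpr (min_le_left _ _))
    obtain ⟨N, hN⟩ := hwc (1 / (n + 1)) (by positivity)
    obtain ⟨r, hr, hwP⟩ := Set.mem_iUnion₂.mp (hw N)
    exact ⟨r, hr, w N, hwP, hN N le_rfl⟩
  choose r hr x hxP hxd using key
  have hrt : ∀ n, r n ≤ t := fun n => (hr n).trans (min_le_left _ _)
  obtain ⟨z, φ, hφ, hconv⟩ := hpac t r hrt (tendsto_helper hr) x hxP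
  have hz : z ∈ E.Omega ds Set.univ t :=
    mem_omega_of_seq E t (r ∘ φ) (fun n => hrt _)
      (seq_le_helper hr φ (fun n => hφ.le_apply)) (x ∘ φ) (fun n => hxP _) z hconv
  have hconvw := hH _ _ hconv
  have hzy : dw z y = 0 := by
    by_contra hne
    have hpos : 0 < dw z y := lt_of_le_of_ne (hdw.1 _ _) (Ne.symm hne)
    obtain ⟨N1, hN1⟩ := hconvw (dw z y / 2) (by linarith)
    obtain ⟨N2, hN2⟩ := exists_nat_bound (show (0 : ℝ) < dw z y / 2 by linarith)
    set n := max N1 N2 with hn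
    have h1 := hN1 n (le_max_left _ _)
    have h5 := hxd (φ n)
    have hb : (1 : ℝ) / ((φ n : ℕ) + 1) ≤ 1 / ((n : ℕ) + 1) := by
      apply one_div_le_one_div_of_le (by positivity)
      have : (n : ℝ) ≤ (φ n : ℕ) := by exact_mod_cast hφ.le_apply
      linarith
    have h6 := hN2 n (le_max_right _ _)
    have ht := hdw.2.2.2 z (x (φ n)) y
    have hsy := hdw.2.2.1 (x (φ n)) z
    have h1' : dw (x (φ n)) z < dw z y / 2 := h1
    linarith
  have hzy' : z = y := (hdw.2.1 z y).mp hzy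
  rwa [← hzy']

lemma omega_compact (E : GES X) (ds : X → X → ℝ) (hds : IsMetric ds)
    (hpac : E.PullbackAsympCompact ds) (t : ℝ) :
    SeqCompactIn ds (E.Omega ds Set.univ t) := by
  intro u hu
  have key : ∀ n : ℕ, ∃ r ≤ min t (-(n : ℝ)), ∃ x ∈ E.P t r Set.univ,
      ds x (u n) < 1 / (n + 1) := by
    intro n
    have hun := hu n
    rw [GES.Omega] at hun
    obtain ⟨w, hw, hwc⟩ :=
      Set.mem_iInter₂.mp hun (min t (-(n : ℝ))) (Set.mem_Iic.mpr (min_le_left _ _))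
    obtain ⟨N, hN⟩ := hwc (1 / (n + 1)) (by positivity)
    obtain ⟨r, hr, hwP⟩ := Set.mem_iUnion₂.mp (hw N)
    exact ⟨r, hr, w N, hwP, hN N le_rfl⟩
  choose r hr x hxP hxd using key
  have hrt : ∀ n, r n ≤ t := fun n => (hr n).trans (min_le_left _ _)
  obtain ⟨y, φ, hφ, hconv⟩ := hpac t r hrt (tendsto_helper hr) x hxP
  have hy : y ∈ E.Omega ds Set.univ t :=
    mem_omega_of_seq E t (r ∘ φ) (fun n => hrt _)
      (seq_le_helper hr φ (fun n => hφ.le_apply)) (x ∘ φ) (fun n => hxP _) y hconv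
  refine ⟨y, hy, φ, hφ, ?_⟩
  apply conv_trans hds hconv
  intro ε hε
  obtain ⟨N, hN⟩ := exists_nat_bound hε
  refine ⟨N, fun n hn => ?_⟩
  have h1 := hxd (φ n)
  have hb : (1 : ℝ) / ((φ n : ℕ) + 1) ≤ 1 / ((n : ℕ) + 1) := by
    apply one_div_le_one_div_of_le (by positivity)
    have : (n : ℝ) ≤ (φ n : ℕ) := by exact_mod_cast hφ.le_apply
    linarith
  have h2 := hN n hn
  calc ds (x (φ n)) (u (φ n)) < 1 / ((φ n : ℕ) + 1) := h1
    _ ≤ 1 / ((n : ℕ) + 1) := hb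
    _ < ε := h2

end Aux

/-- if `E` is pullback asymptotically compact then the weak
pullback attractor is a strongly compact strong pullback attractor:
`A_s(t)` exists and `A_s(t) = Ω_s(X,t) = Ω_w(X,t) = A_w(t)`. -/
theorem stmt9 {X : Type*} (E : GES X) (ds dw : X → X → ℝ)
    (hds : IsMetric ds) (hdw : IsMetric dw)
    (hcompact : SeqCompactIn dw (Set.univ : Set X))
    (H : ∀ u v : ℕ → X, DistTendsZero ds u v → DistTendsZero dw u v)
    (hpac : E.PullbackAsympCompact ds) :
    E.IsPullbackAttractor ds (fun t => E.Omega ds Set.univ t) ∧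
    (∀ t : ℝ, SeqCompactIn ds (E.Omega ds Set.univ t)) ∧
    (∀ t : ℝ, E.Omega ds Set.univ t = E.Omega dw Set.univ t) ∧
    E.IsPullbackAttractor dw (fun t => E.Omega dw Set.univ t) := by
  have hH : ∀ (u : ℕ → X) (y : X), Conv ds u y → Conv dw u y :=
    fun u y h => H u (fun _ => y) h
  have heq : ∀ t, E.Omega ds Set.univ t = E.Omega dw Set.univ t := by
    intro t
    apply Set.Subset.antisymm
    · rw [GES.Omega, GES.Omega]
      exact Set.iInter₂_mono fun s _ => seqClosure_mono_d hH _
    · exact omega_dw_subset E ds dw hdw hH hpac t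
  have heqf : (fun t => E.Omega dw Set.univ t) = fun t => E.Omega ds Set.univ t :=
    funext fun t => (heq t).symm
  refine ⟨⟨fun t => seqClosed_omega E hds _ t,
      omega_attracts E ds ds hpac (fun _ _ h => h),
      fun B hBc hBa t => omega_min E hds B hBc hBa t⟩,
    fun t => omega_compact E ds hds hpac t, heq,
    ⟨fun t => seqClosed_omega E hdw _ t, ?_,
      fun B hBc hBa t => omega_min E hdw B hBc hBa t⟩⟩
  rw [heqf]
  exact omega_attracts E ds dw hpac hH
end

section
/- If E satisfies A1 and A ⊆ X satisfies Ω_w(A,t) ⊆ A for every t ∈ ℝ, then Ω_w(A,t) = Ω_s(A,t) for every t. -/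
open Filter Topology MeasureTheory

variable {X : Type*}

lemma conv_unique {X : Type*} {d : X → X → ℝ} (hd : IsMetric d) {u : ℕ → X} {a b : X}
    (ha : Conv d u a) (hb : Conv d u b) : a = b := by
  obtain ⟨h0, heq, hsymm, htri⟩ := hd
  by_contra hne
  have hpos : 0 < d a b := lt_of_le_of_ne (h0 a b) (fun h => hne ((heq a b).mp h.symm))
  obtain ⟨N1, hN1⟩ := ha (d a b / 2) (by linarith)
  obtain ⟨N2, hN2⟩ := hb (d a b / 2) (by linarith)
  have h1 := hN1 (max N1 N2) (le_max_left _ _)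
  have h2 := hN2 (max N1 N2) (le_max_right _ _)
  have h3 := htri a (u (max N1 N2)) b
  rw [hsymm a (u (max N1 N2))] at h3
  linarith

lemma conv_tail {X : Type*} {d : X → X → ℝ} {u : ℕ → X} {x : X}
    (h : Conv d u x) (M : ℕ) : Conv d (fun n => u (n + M)) x := by
  intro ε hε
  obtain ⟨N, hN⟩ := h ε hε
  exact ⟨N, fun n hn => hN (n + M) (le_trans hn (Nat.le_add_right n M))⟩

lemma convTraj_point {X : Type*} {d : X → X → ℝ} {s : ℝ} {u : ℕ → ℝ → X} {v : ℝ → X}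
    (h : ConvTraj d s u v) {p : ℝ} (hp : s ≤ p) : Conv d (fun n => u n p) (v p) := by
  intro ε hε
  obtain ⟨N, hN⟩ := h p ε hε
  exact ⟨N, fun n hn => hN n hn p ⟨hp, le_rfl⟩⟩

/-- under A1, if `Ω_w(A,t) ⊆ A` for all `t`, then
`Ω_w(A,t) = Ω_s(A,t)` for all `t`. -/
theorem stmt12 {X : Type*} (E : GES X) (ds dw : X → X → ℝ)
    (hds : IsMetric ds) (hdw : IsMetric dw)
    (hcompact : SeqCompactIn dw (Set.univ : Set X))
    (H : ∀ u v : ℕ → X, DistTendsZero ds u v → DistTendsZero dw u v)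
    (hA1 : E.A1 dw) (A : Set X) (hA : ∀ t : ℝ, E.Omega dw A t ⊆ A) :
    ∀ t : ℝ, E.Omega dw A t = E.Omega ds A t := by
  intro t
  ext x
  constructor
  · -- hard direction : Ω_w ⊆ Ω_s
    intro hx
    -- Step 1: extract a sequence of trajectories with starting times → -∞
    have key : ∀ n : ℕ, ∃ (u : ℝ → X) (r : ℝ), r ≤ t - n ∧ u ∈ E.traj r ∧ u r ∈ A ∧
        dw (u t) x < 1 / (n + 1) := by
      intro n
      have hx' := Set.mem_iInter₂.mp hx (t - n)
        (Set.mem_Iic.mpr (by linarith [Nat.cast_nonneg (α := ℝ) n]))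
      obtain ⟨w, hw, hconv⟩ := hx'
      obtain ⟨N, hN⟩ := hconv (1 / (n + 1)) (by positivity)
      have hwN := hw N
      simp only [Set.mem_iUnion, Set.mem_Iic] at hwN
      obtain ⟨r, hr, u, hu, huA, hut⟩ := hwN
      exact ⟨u, r, hr, hu, huA, by rw [hut]; exact hN N le_rfl⟩
    choose u r h1 h2 h3 h4 using key
    apply Set.mem_iInter₂.mpr
    intro s hs
    have hst : s ≤ t := Set.mem_Iic.mp hs
    obtain ⟨m0, hm0⟩ := exists_nat_ge (t - (s - 1))
    have hr' : ∀ n : ℕ, r (n + m0) ≤ s - 1 := by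
      intro n
      have := h1 (n + m0)
      have : r (n + m0) ≤ t - (n + m0 : ℕ) := this
      push_cast at this
      linarith
    have hU : ∀ n : ℕ, u (n + m0) ∈ E.traj (s - 1) :=
      fun n => E.mono (hr' n) (h2 (n + m0))
    obtain ⟨v, hv, φ, hφ, hct⟩ := hA1 (s - 1) (fun n => u (n + m0)) hU
    have hct' : ConvTraj dw (s - 1) (fun n => u (φ n + m0)) v := hct
    -- (a) v t = x
    have hc1 : Conv dw (fun n => u (φ n + m0) t) (v t) :=
      convTraj_point hct' (by linarith)
    have hc2 : Conv dw (fun n => u (φ n + m0) t) x := by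
      intro ε hε
      obtain ⟨N, hN⟩ := exists_nat_one_div_lt hε
      refine ⟨N, fun n hn => ?_⟩
      have h4' := h4 (φ n + m0)
      have hle : (N : ℝ) + 1 ≤ (φ n + m0 : ℕ) + 1 := by
        have : N ≤ φ n + m0 := le_trans (le_trans hn (hφ.le_apply)) (Nat.le_add_right _ _)
        exact_mod_cast Nat.succ_le_succ this
      have : (1 : ℝ) / ((φ n + m0 : ℕ) + 1) ≤ 1 / ((N : ℝ) + 1) :=
        one_div_le_one_div_of_le (by positivity) hle
      calc dw (u (φ n + m0) t) x < 1 / ((φ n + m0 : ℕ) + 1) := h4'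
        _ ≤ 1 / ((N : ℝ) + 1) := this
        _ < ε := hN
    have hvt : v t = x := conv_unique hdw hc1 hc2
    -- (b) v (s-1) ∈ Ω_w(A, s-1) ⊆ A
    have hc3 : Conv dw (fun n => u (φ n + m0) (s - 1)) (v (s - 1)) :=
      convTraj_point hct' le_rfl
    have hvs1 : v (s - 1) ∈ E.Omega dw A (s - 1) := by
      apply Set.mem_iInter₂.mpr
      intro s'' hs''
      have hs''le : s'' ≤ s - 1 := Set.mem_Iic.mp hs''
      obtain ⟨M, hM⟩ := exists_nat_ge (t - s'')
      refine ⟨fun n => u (φ (n + M) + m0) (s - 1), fun n => ?_, conv_tail hc3 M⟩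
      have hk : r (φ (n + M) + m0) ≤ s'' := by
        have hge : M ≤ φ (n + M) + m0 :=
          le_trans (le_trans (Nat.le_add_left M n) hφ.le_apply) (Nat.le_add_right _ _)
        have := h1 (φ (n + M) + m0)
        have hcast : (M : ℝ) ≤ ((φ (n + M) + m0 : ℕ) : ℝ) := by exact_mod_cast hge
        linarith
      exact Set.mem_biUnion (Set.mem_Iic.mpr hk)
        ⟨u (φ (n + M) + m0), h2 _, h3 _, rfl⟩
    have hvA : v (s - 1) ∈ A := hA (s - 1) hvs1
    -- (c) conclude with the constant sequence
    refine ⟨fun _ => x, fun n => ?_, fun ε hε => ⟨0, fun n _ => ?_⟩⟩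
    · exact Set.mem_biUnion (Set.mem_Iic.mpr (by linarith : s - 1 ≤ s))
        ⟨v, E.mono le_rfl hv, hvA, hvt⟩
    · have : ds x x = 0 := (hds.2.1 x x).mpr rfl
      simpa [this] using hε
  · -- easy direction : Ω_s ⊆ Ω_w
    intro hx
    apply Set.mem_iInter₂.mpr
    intro s hs
    obtain ⟨w, hw, hc⟩ := Set.mem_iInter₂.mp hx s hs
    exact ⟨w, hw, H w (fun _ => x) hc⟩
end
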